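/- Let G(ξ) = (1/4π)e^{−|ξ|²/4} and let w̃ ∈ L²_w(ℝ²) (i.e. G^{−1/2} w̃ ∈ L²) be sufficiently regular, and let ṽ = K_{BS} ⋆ w̃ be its Biot-Savart velocity. Then ∫_{ℝ²} G^{−1}(ξ) w̃(ξ) ṽ(ξ)·∇G(ξ) dξ = 0. -/

import Mathlib

open Real MeasureTheory Metric Set
open scoped ENNReal RealInnerProductSpace

noncomputable section

abbrev E2 := EuclideanSpace ℝ (Fin 2)

def perp (x : E2) : E2 := (EuclideanSpace.equiv (Fin 2) ℝ).symm ![-(x 1), x 0]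

/-- The Gaussian `G(ξ) = (1/4π) e^{−|ξ|²/4}`. -/
def Gg (ξ : E2) : ℝ := (1 / (4 * π)) * Real.exp (-‖ξ‖ ^ 2 / 4)

namespace S14

/-! ### Basic facts about `perp` -/

lemma perp_apply0 (x : E2) : perp x 0 = -(x 1) := rfl
lemma perp_apply1 (x : E2) : perp x 1 = x 0 := rfl

lemma inner_perp (x y : E2) : ⟪perp x, y⟫ = -(x 1) * y 0 + x 0 * y 1 := by
  simp [PiLp.inner_apply, Fin.sum_univ_two, perp_apply0, perp_apply1, RCLike.inner_apply,
    conj_trivial]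
  ring

lemma norm_perp (x : E2) : ‖perp x‖ = ‖x‖ := by
  rw [EuclideanSpace.norm_eq, EuclideanSpace.norm_eq]
  simp [Fin.sum_univ_two, perp_apply0, perp_apply1]
  ring_nf

lemma continuous_perp : Continuous perp := by
  apply Continuous.comp (g := (EuclideanSpace.equiv (Fin 2) ℝ).symm)
  · exact (EuclideanSpace.equiv (Fin 2) ℝ).symm.continuous
  · apply continuous_pi
    intro i
    fin_cases i
    · exact (continuous_apply 1).neg.comp (EuclideanSpace.equiv (Fin 2) ℝ).continuous
    · exact (continuous_apply 0).comp (EuclideanSpace.equiv (Fin 2) ℝ).continuous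

/-! ### The gradient of the Gaussian -/

lemma Gg_pos (ξ : E2) : 0 < Gg ξ := by
  have := pi_pos
  exact mul_pos (by positivity) (exp_pos _)

lemma hasGradientAt_Gg (ξ : E2) : HasGradientAt Gg ((-(Gg ξ) / 2) • ξ) ξ := by
  have h1 : HasFDerivAt (fun x : E2 => ‖x‖ ^ 2) (2 • innerSL ℝ ξ) ξ :=
    (hasStrictFDerivAt_norm_sq ξ).hasFDerivAt
  have h2 : HasFDerivAt (fun x : E2 => -‖x‖ ^ 2 / 4)
      ((-(4 : ℝ)⁻¹) • (2 • innerSL ℝ ξ)) ξ := by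
    have := h1.const_smul (-(4 : ℝ)⁻¹)
    convert this using 2 with y
    case e'_11 =>
      simp only [Pi.smul_apply, smul_eq_mul]
      ring
    all_goals rfl
  have h3 := (h2.exp).const_mul (1 / (4 * π))
  have h4 : HasFDerivAt Gg ((-(Gg ξ) / 2) • innerSL ℝ ξ) ξ := by
    convert h3 using 1
    case e'_11 => rfl
    case e'_12 =>
      ext z
      simp only [ContinuousLinearMap.smul_apply, smul_eq_mul, Gg]
      ring
    all_goals rfl
  have h5 : HasGradientAt Gg ((InnerProductSpace.toDual ℝ E2).symm
      ((-(Gg ξ) / 2) • innerSL ℝ ξ)) ξ := h4.hasGradientAt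
  convert h5 using 1
  have : ((-(Gg ξ) / 2) • innerSL ℝ ξ) = InnerProductSpace.toDual ℝ E2 ((-(Gg ξ) / 2) • ξ) := by
    ext z
    simp [InnerProductSpace.toDual_apply_apply, inner_smul_left]
  rw [this, LinearIsometryEquiv.symm_apply_apply]

lemma gradient_Gg (ξ : E2) : gradient Gg ξ = (-(Gg ξ) / 2) • ξ :=
  (hasGradientAt_Gg ξ).gradient

/-! ### Local integrability of `‖u‖⁻¹` in dimension 2 -/

def q (t : ℝ) : ℝ := (Icc (-1:ℝ) 1).indicator (fun t => |t| ^ (-(2⁻¹ : ℝ))) t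

lemma integrableOn_f_Ioc : IntegrableOn (fun t : ℝ => |t| ^ (-(2⁻¹ : ℝ))) (Ioc (0:ℝ) 1) := by
  have h : IntervalIntegrable (fun x : ℝ => x ^ (-(2⁻¹ : ℝ))) volume 0 1 :=
    intervalIntegral.intervalIntegrable_rpow' (by norm_num)
  have h2 : IntegrableOn (fun x : ℝ => x ^ (-(2⁻¹ : ℝ))) (Ioc (0:ℝ) 1) :=
    (intervalIntegrable_iff_integrableOn_Ioc_of_le (by norm_num)).mp h
  exact h2.congr_fun (fun t ht => by rw [abs_of_pos ht.1]) measurableSet_Ioc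

lemma integrableOn_f_Ico : IntegrableOn (fun t : ℝ => |t| ^ (-(2⁻¹ : ℝ))) (Ico (-1:ℝ) 0) := by
  have hmp : MeasurePreserving (fun t : ℝ => -t) volume volume :=
    Measure.measurePreserving_neg volume
  have hemb : MeasurableEmbedding (fun t : ℝ => -t) :=
    (Homeomorph.neg ℝ).measurableEmbedding
  have hset : (fun t : ℝ => -t) ⁻¹' (Ioc (0:ℝ) 1) = Ico (-1:ℝ) 0 := by
    ext t
    simp only [mem_preimage, mem_Ioc, mem_Ico]
    constructor <;> intro h <;> constructor <;> linarith [h.1, h.2]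
  have := (hmp.integrableOn_comp_preimage hemb
    (f := fun t : ℝ => |t| ^ (-(2⁻¹ : ℝ))) (s := Ioc (0:ℝ) 1)).mpr integrableOn_f_Ioc
  rw [hset] at this
  exact this.congr_fun (fun t _ => by simp [Function.comp, abs_neg]) measurableSet_Ico

lemma integrable_q : Integrable q := by
  have h3 : IntegrableOn (fun t : ℝ => |t| ^ (-(2⁻¹ : ℝ))) (Ico (-1:ℝ) 0 ∪ Ioc 0 1) :=
    integrableOn_f_Ico.union integrableOn_f_Ioc
  have hae : (Ico (-1:ℝ) 0 ∪ Ioc 0 1 : Set ℝ) =ᵐ[volume] Icc (-1:ℝ) 1 := by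
    have h1 : (Ioc (0:ℝ) 1 : Set ℝ) =ᵐ[volume] Icc (0:ℝ) 1 := Ioc_ae_eq_Icc
    have h2 : (Ico (-1:ℝ) 0 ∪ Ioc 0 1 : Set ℝ) =ᵐ[volume] ((Ico (-1:ℝ) 0 ∪ Icc 0 1 : Set ℝ)) :=
      ae_eq_set_union (ae_eq_refl _) h1
    rw [Ico_union_Icc_eq_Icc (by norm_num : (-1:ℝ) ≤ 0) (by norm_num : (0:ℝ) ≤ 1)] at h2
    exact h2
  have h4 : IntegrableOn (fun t : ℝ => |t| ^ (-(2⁻¹ : ℝ))) (Icc (-1:ℝ) 1) :=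
    h3.congr_set_ae hae.symm
  exact h4.integrable_indicator measurableSet_Icc

lemma integrable_qq : Integrable (fun u : E2 => q (u 0) * q (u 1)) := by
  have hmp := (EuclideanSpace.volume_preserving_symm_measurableEquiv_toLp (Fin 2))
  have hemb := (MeasurableEquiv.toLp 2 (Fin 2 → ℝ)).symm.measurableEmbedding
  have hpi : Integrable (fun x : Fin 2 → ℝ => ∏ i, q (x i)) :=
    Integrable.fin_nat_prod (fun _ => integrable_q)
  have hpi2 : Integrable (fun x : Fin 2 → ℝ => q (x 0) * q (x 1)) := by
    have : (fun x : Fin 2 → ℝ => ∏ i, q (x i)) = fun x => q (x 0) * q (x 1) := by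
      funext x; rw [Fin.prod_univ_two]
    rwa [this] at hpi
  exact (hmp.integrable_comp_emb hemb).mpr hpi2

lemma null_axis (i : Fin 2) : volume {u : E2 | u i = 0} = 0 := by
  have hS : {u : E2 | u i = 0}
      = (LinearMap.ker ((EuclideanSpace.proj i : E2 →L[ℝ] ℝ) : E2 →ₗ[ℝ] ℝ) : Set E2) := by
    ext u; simp [LinearMap.mem_ker, PiLp.proj_apply]
  rw [hS]
  apply Measure.addHaar_submodule
  intro h
  have h1 : (EuclideanSpace.single i (1:ℝ) : E2) ∈
      LinearMap.ker ((EuclideanSpace.proj i : E2 →L[ℝ] ℝ) : E2 →ₗ[ℝ] ℝ) := h ▸ trivial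
  simp [LinearMap.mem_ker, PiLp.proj_apply] at h1

lemma abs_coord_le (u : E2) (i : Fin 2) : |u i| ≤ ‖u‖ := by
  have h2 : |u i| = Real.sqrt ((u i) ^ 2) := (Real.sqrt_sq_eq_abs _).symm
  rw [h2, EuclideanSpace.norm_eq]
  apply Real.sqrt_le_sqrt
  fin_cases i <;> simp [Fin.sum_univ_two, sq_abs] <;> positivity

lemma integrableOn_inv_norm_ball :
    IntegrableOn (fun u : E2 => ‖u‖⁻¹) (ball (0:E2) 1) := by
  apply Integrable.mono' (integrable_qq.restrict (s := ball (0:E2) 1))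
  · exact (measurable_norm.inv).aestronglyMeasurable
  · have h0 : ∀ᵐ u ∂(volume.restrict (ball (0:E2) 1)), u ∈ ball (0:E2) 1 :=
      ae_restrict_mem measurableSet_ball
    have hnull : volume ({u : E2 | u 0 = 0} ∪ {u : E2 | u 1 = 0}) = 0 :=
      le_antisymm (le_trans (measure_union_le _ _) (by rw [null_axis 0, null_axis 1]; simp))
        zero_le
    have h1 : ∀ᵐ u ∂(volume.restrict (ball (0:E2) 1)),
        u ∉ ({u : E2 | u 0 = 0} ∪ {u : E2 | u 1 = 0}) :=
      ae_restrict_of_ae ((ae_iff.mpr (by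
        convert hnull using 2
        ext u
        simp only [mem_union, mem_setOf_eq]
        tauto)))
    filter_upwards [h0, h1] with u hu hax
    have hu0 : u 0 ≠ 0 := fun h => hax (Or.inl h)
    have hu1 : u 1 ≠ 0 := fun h => hax (Or.inr h)
    have ha : (0:ℝ) < |u 0| := abs_pos.mpr hu0
    have hb : (0:ℝ) < |u 1| := abs_pos.mpr hu1
    have hn : ‖u‖ < 1 := by simpa [mem_ball, dist_eq_norm] using hu
    have hq0 : q (u 0) = |u 0| ^ (-(2⁻¹ : ℝ)) := by
      rw [q, indicator_of_mem]
      rw [mem_Icc]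
      constructor <;> [linarith [abs_le.mp (le_of_lt (lt_of_le_of_lt (abs_coord_le u 0) hn))];
        linarith [abs_le.mp (le_of_lt (lt_of_le_of_lt (abs_coord_le u 0) hn))]]
    have hq1 : q (u 1) = |u 1| ^ (-(2⁻¹ : ℝ)) := by
      rw [q, indicator_of_mem]
      rw [mem_Icc]
      constructor <;> [linarith [abs_le.mp (le_of_lt (lt_of_le_of_lt (abs_coord_le u 1) hn))];
        linarith [abs_le.mp (le_of_lt (lt_of_le_of_lt (abs_coord_le u 1) hn))]]
    have hupos : (0:ℝ) < ‖u‖ := lt_of_lt_of_le ha (abs_coord_le u 0)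
    have hab : |u 0| * |u 1| ≤ ‖u‖ ^ 2 := by
      have : ‖u‖ ^ 2 = (u 0) ^ 2 + (u 1) ^ 2 := by
        rw [EuclideanSpace.norm_eq, Real.sq_sqrt (by positivity)]
        simp [Fin.sum_univ_two, sq_abs]
      nlinarith [sq_nonneg (|u 0| - |u 1|), abs_nonneg (u 0), abs_nonneg (u 1),
        sq_abs (u 0), sq_abs (u 1)]
    have hsqrt : Real.sqrt (|u 0| * |u 1|) ≤ ‖u‖ := by
      rw [show ‖u‖ = Real.sqrt (‖u‖ ^ 2) from (Real.sqrt_sq hupos.le).symm]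
      exact Real.sqrt_le_sqrt hab
    have hkey : ‖u‖⁻¹ ≤ |u 0| ^ (-(2⁻¹ : ℝ)) * |u 1| ^ (-(2⁻¹ : ℝ)) := by
      have hsp : (0:ℝ) < Real.sqrt (|u 0| * |u 1|) := Real.sqrt_pos.mpr (by positivity)
      have h3 : ‖u‖⁻¹ ≤ (Real.sqrt (|u 0| * |u 1|))⁻¹ := inv_anti₀ hsp hsqrt
      have h4 : (Real.sqrt (|u 0| * |u 1|))⁻¹ = |u 0| ^ (-(2⁻¹ : ℝ)) * |u 1| ^ (-(2⁻¹ : ℝ)) := by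
        rw [Real.sqrt_eq_rpow, ← Real.mul_rpow ha.le hb.le, ← Real.rpow_neg (by positivity)]
        norm_num
      linarith
    rw [Real.norm_eq_abs, abs_of_nonneg (inv_nonneg.mpr (norm_nonneg u)), hq0, hq1]
    exact hkey

lemma inv_norm_ball_shift (ξ : E2) :
    IntegrableOn (fun η : E2 => ‖ξ - η‖⁻¹) (ball ξ 1) ∧
    ∫ η in ball ξ 1, ‖ξ - η‖⁻¹ = ∫ u in ball (0:E2) 1, ‖u‖⁻¹ := by
  have hmp : MeasurePreserving (fun η : E2 => ξ - η) volume volume :=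
    Measure.measurePreserving_sub_left volume ξ
  have hemb : MeasurableEmbedding (fun η : E2 => ξ - η) :=
    (MeasurableEquiv.subLeft ξ).measurableEmbedding
  have hset : (fun η : E2 => ξ - η) ⁻¹' (ball (0:E2) 1) = ball ξ 1 := by
    ext η
    simp only [mem_preimage, mem_ball, dist_zero_right, dist_eq_norm]
    rw [sub_zero, norm_sub_rev]
  constructor
  · have := (hmp.integrableOn_comp_preimage hemb
      (f := fun u : E2 => ‖u‖⁻¹) (s := ball (0:E2) 1)).mpr integrableOn_inv_norm_ball
    rw [hset] at this
    exact this
  · have := hmp.setIntegral_preimage_emb hemb (fun u : E2 => ‖u‖⁻¹) (ball (0:E2) 1)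
    rw [hset] at this
    exact this

/-! ### Integrability of the Biot–Savart kernel against `w` -/

lemma kernel_meas (w : SchwartzMap E2 ℝ) (ξ : E2) :
    Measurable (fun η : E2 => ‖w η‖ * ‖ξ - η‖⁻¹) :=
  (w.continuous.norm.measurable).mul ((measurable_const.sub measurable_id).norm.inv)

lemma kernel_integrable (w : SchwartzMap E2 ℝ) {M : ℝ} (hM : ∀ x, ‖w x‖ ≤ M) (ξ : E2) :
    Integrable (fun η : E2 => ‖w η‖ * ‖ξ - η‖⁻¹) ∧
    ∫ η, ‖w η‖ * ‖ξ - η‖⁻¹ ≤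
      M * (∫ u in ball (0:E2) 1, ‖u‖⁻¹) + ∫ η, ‖w η‖ := by
  have hball : IntegrableOn (fun η : E2 => ‖w η‖ * ‖ξ - η‖⁻¹) (ball ξ 1) := by
    apply Integrable.mono' ((inv_norm_ball_shift ξ).1.const_mul M)
    · exact (kernel_meas w ξ).aestronglyMeasurable
    · refine ae_of_all _ fun η => ?_
      rw [Real.norm_eq_abs,
        abs_of_nonneg (mul_nonneg (norm_nonneg _) (inv_nonneg.mpr (norm_nonneg _)))]
      exact mul_le_mul_of_nonneg_right (hM η) (inv_nonneg.mpr (norm_nonneg _))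
  have hless : ∀ η : E2, η ∈ (ball ξ 1)ᶜ → ‖w η‖ * ‖ξ - η‖⁻¹ ≤ ‖w η‖ := by
    intro η hη
    have h1 : (1:ℝ) ≤ ‖ξ - η‖ := by
      have := (mem_ball.not.mp hη)
      rw [dist_eq_norm, norm_sub_rev] at this
      linarith [not_lt.mp this]
    calc ‖w η‖ * ‖ξ - η‖⁻¹ ≤ ‖w η‖ * 1 :=
          mul_le_mul_of_nonneg_left (inv_le_one_of_one_le₀ h1) (norm_nonneg _)
      _ = ‖w η‖ := mul_one _
  have hcompl : IntegrableOn (fun η : E2 => ‖w η‖ * ‖ξ - η‖⁻¹) (ball ξ 1)ᶜ := by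
    apply Integrable.mono' (w.integrable.norm.restrict (s := (ball ξ 1)ᶜ))
    · exact (kernel_meas w ξ).aestronglyMeasurable
    · refine (ae_restrict_iff' measurableSet_ball.compl).mpr (ae_of_all _ fun η hη => ?_)
      rw [Real.norm_eq_abs,
        abs_of_nonneg (mul_nonneg (norm_nonneg _) (inv_nonneg.mpr (norm_nonneg _)))]
      exact hless η hη
  have hInt : Integrable (fun η : E2 => ‖w η‖ * ‖ξ - η‖⁻¹) := by
    rw [← integrableOn_univ, ← union_compl_self (ball ξ 1)]
    exact hball.union hcompl
  refine ⟨hInt, ?_⟩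
  have hsplit : ∫ η, ‖w η‖ * ‖ξ - η‖⁻¹ =
      (∫ η in ball ξ 1, ‖w η‖ * ‖ξ - η‖⁻¹) + ∫ η in (ball ξ 1)ᶜ, ‖w η‖ * ‖ξ - η‖⁻¹ :=
    (integral_add_compl measurableSet_ball hInt).symm
  have b1 : ∫ η in ball ξ 1, ‖w η‖ * ‖ξ - η‖⁻¹ ≤ M * ∫ u in ball (0:E2) 1, ‖u‖⁻¹ := by
    calc ∫ η in ball ξ 1, ‖w η‖ * ‖ξ - η‖⁻¹
        ≤ ∫ η in ball ξ 1, M * ‖ξ - η‖⁻¹ :=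
          setIntegral_mono_on hball ((inv_norm_ball_shift ξ).1.const_mul M) measurableSet_ball
            (fun η _ => mul_le_mul_of_nonneg_right (hM η) (inv_nonneg.mpr (norm_nonneg _)))
      _ = M * ∫ η in ball ξ 1, ‖ξ - η‖⁻¹ := integral_const_mul _ _
      _ = M * ∫ u in ball (0:E2) 1, ‖u‖⁻¹ := by rw [(inv_norm_ball_shift ξ).2]
  have b2 : ∫ η in (ball ξ 1)ᶜ, ‖w η‖ * ‖ξ - η‖⁻¹ ≤ ∫ η, ‖w η‖ := by
    calc ∫ η in (ball ξ 1)ᶜ, ‖w η‖ * ‖ξ - η‖⁻¹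
        ≤ ∫ η in (ball ξ 1)ᶜ, ‖w η‖ :=
          setIntegral_mono_on hcompl (w.integrable.norm.integrableOn)
            measurableSet_ball.compl hless
      _ ≤ ∫ η, ‖w η‖ :=
          setIntegral_le_integral w.integrable.norm (ae_of_all _ fun η => norm_nonneg _)
  linarith

/-! ### The Biot–Savart integrand -/

lemma slice_meas (w : SchwartzMap E2 ℝ) (ξ : E2) :
    AEStronglyMeasurable (fun η : E2 => (w η / ‖ξ - η‖ ^ 2) • perp (ξ - η)) volume := by
  refine AEStronglyMeasurable.smul (f := fun η => w η / ‖ξ - η‖ ^ 2) (g := fun η => perp (ξ - η)) ?_ ?_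
  · exact ((w.continuous.measurable).div
      ((measurable_const.sub measurable_id).norm.pow_const 2)).aestronglyMeasurable
  · exact (continuous_perp.comp (continuous_const.sub continuous_id)).aestronglyMeasurable

lemma norm_slice_le (w : SchwartzMap E2 ℝ) (ξ η : E2) :
    ‖(w η / ‖ξ - η‖ ^ 2) • perp (ξ - η)‖ ≤ ‖w η‖ * ‖ξ - η‖⁻¹ := by
  rw [norm_smul, norm_perp]
  rcases eq_or_ne (‖ξ - η‖) 0 with h | h
  · rw [h]; simp
  · have hp : (0:ℝ) < ‖ξ - η‖ := lt_of_le_of_ne (norm_nonneg _) (Ne.symm h)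
    rw [Real.norm_eq_abs (w η / ‖ξ - η‖ ^ 2), abs_div,
      abs_of_nonneg (by positivity : (0:ℝ) ≤ ‖ξ - η‖ ^ 2), Real.norm_eq_abs (w η)]
    have heq : |w η| / ‖ξ - η‖ ^ 2 * ‖ξ - η‖ = |w η| * ‖ξ - η‖⁻¹ := by
      field_simp
    rw [heq]

lemma slice_integrable (w : SchwartzMap E2 ℝ) {M : ℝ} (hM : ∀ x, ‖w x‖ ≤ M) (ξ : E2) :
    Integrable (fun η : E2 => (w η / ‖ξ - η‖ ^ 2) • perp (ξ - η)) :=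
  Integrable.mono' (kernel_integrable w hM ξ).1 (slice_meas w ξ)
    (ae_of_all _ fun η => norm_slice_le w ξ η)

def Fk (w : SchwartzMap E2 ℝ) (ξ η : E2) : ℝ :=
  w ξ * ((w η / ‖ξ - η‖ ^ 2) * ⟪perp (ξ - η), ξ⟫)

lemma Fk_meas (w : SchwartzMap E2 ℝ) :
    AEStronglyMeasurable (Function.uncurry (Fk w)) ((volume : Measure E2).prod volume) := by
  have m1 : Measurable fun p : E2 × E2 => w p.1 := w.continuous.measurable.comp measurable_fst
  have m2 : Measurable fun p : E2 × E2 => w p.2 := w.continuous.measurable.comp measurable_snd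
  have m3 : Measurable fun p : E2 × E2 => ‖p.1 - p.2‖ ^ 2 :=
    ((measurable_fst.sub measurable_snd).norm.pow_const 2)
  have m4 : Continuous fun p : E2 × E2 => (⟪perp (p.1 - p.2), p.1⟫ : ℝ) :=
    Continuous.inner (continuous_perp.comp (continuous_fst.sub continuous_snd)) continuous_fst
  exact (m1.mul ((m2.div m3).mul m4.measurable)).aestronglyMeasurable

lemma Fk_le (w : SchwartzMap E2 ℝ) (ξ η : E2) :
    ‖Fk w ξ η‖ ≤ (‖w ξ‖ * ‖ξ‖) * (‖w η‖ * ‖ξ - η‖⁻¹) := by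
  have hinner : |(⟪perp (ξ - η), ξ⟫ : ℝ)| ≤ ‖ξ - η‖ * ‖ξ‖ := by
    calc |(⟪perp (ξ - η), ξ⟫ : ℝ)| ≤ ‖perp (ξ - η)‖ * ‖ξ‖ := abs_real_inner_le_norm _ _
      _ = ‖ξ - η‖ * ‖ξ‖ := by rw [norm_perp]
  rcases eq_or_ne (‖ξ - η‖) 0 with h | h
  · have hz : ξ - η = 0 := norm_eq_zero.mp h
    have : |(⟪perp (ξ - η), ξ⟫ : ℝ)| = 0 := by
      rw [abs_eq_zero]
      rw [inner_perp]
      rw [hz]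
      show -((0 : E2) 1) * ξ 0 + (0 : E2) 0 * ξ 1 = 0
      norm_num
    rw [Fk, Real.norm_eq_abs, abs_mul, abs_mul, this, mul_zero, mul_zero, h]
    positivity
  · have hp : (0:ℝ) < ‖ξ - η‖ := lt_of_le_of_ne (norm_nonneg _) (Ne.symm h)
    rw [Fk, Real.norm_eq_abs, abs_mul, abs_mul, abs_div,
      abs_of_nonneg (by positivity : (0:ℝ) ≤ ‖ξ - η‖ ^ 2)]
    calc |w ξ| * (|w η| / ‖ξ - η‖ ^ 2 * |(⟪perp (ξ - η), ξ⟫ : ℝ)|)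
        ≤ |w ξ| * (|w η| / ‖ξ - η‖ ^ 2 * (‖ξ - η‖ * ‖ξ‖)) := by
          apply mul_le_mul_of_nonneg_left _ (abs_nonneg _)
          exact mul_le_mul_of_nonneg_left hinner (by positivity)
      _ = (‖w ξ‖ * ‖ξ‖) * (‖w η‖ * ‖ξ - η‖⁻¹) := by
          rw [Real.norm_eq_abs, Real.norm_eq_abs]
          field_simp

lemma Fk_slice_eq (w : SchwartzMap E2 ℝ) (ξ : E2) :
    (fun η => Fk w ξ η)
      = fun η => w ξ * (innerSL ℝ ξ) ((w η / ‖ξ - η‖ ^ 2) • perp (ξ - η)) := by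
  funext η
  rw [Fk]
  rw [innerSL_apply_apply, real_inner_smul_right, real_inner_comm]

lemma Fk_slice_integrable (w : SchwartzMap E2 ℝ) {M : ℝ} (hM : ∀ x, ‖w x‖ ≤ M) (ξ : E2) :
    Integrable (fun η => Fk w ξ η) := by
  rw [Fk_slice_eq w ξ]
  exact (((innerSL ℝ ξ).integrable_comp (slice_integrable w hM ξ)).const_mul (w ξ))

lemma Fk_prod_integrable (w : SchwartzMap E2 ℝ) {M : ℝ} (hM : ∀ x, ‖w x‖ ≤ M) :
    Integrable (Function.uncurry (Fk w)) ((volume : Measure E2).prod volume) := by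
  set C : ℝ := M * (∫ u in ball (0:E2) 1, ‖u‖⁻¹) + ∫ η, ‖w η‖ with hC
  rw [integrable_prod_iff (Fk_meas w)]
  constructor
  · exact ae_of_all _ fun ξ => Fk_slice_integrable w hM ξ
  · have hg : Integrable (fun ξ : E2 => (‖w ξ‖ * ‖ξ‖) * C) := by
      have h0 := (SchwartzMap.integrable_pow_mul volume w 1).mul_const C
      exact h0.congr (ae_of_all _ fun x => by simp only [pow_one]; ring)
    apply Integrable.mono' hg ((Fk_meas w).norm.integral_prod_right')
    refine ae_of_all _ fun ξ => ?_
    have hnn : (0:ℝ) ≤ ∫ η, ‖Fk w ξ η‖ := integral_nonneg fun η => norm_nonneg _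
    show |∫ η : E2, ‖Fk w ξ η‖| ≤ ‖w ξ‖ * ‖ξ‖ * C
    rw [abs_of_nonneg hnn]
    have hmono : ∫ η, ‖Fk w ξ η‖ ≤ ∫ η, (‖w ξ‖ * ‖ξ‖) * (‖w η‖ * ‖ξ - η‖⁻¹) := by
      apply integral_mono (Fk_slice_integrable w hM ξ).norm
        ((kernel_integrable w hM ξ).1.const_mul (‖w ξ‖ * ‖ξ‖))
      exact fun η => Fk_le w ξ η
    calc ∫ η, ‖Fk w ξ η‖ ≤ ∫ η, (‖w ξ‖ * ‖ξ‖) * (‖w η‖ * ‖ξ - η‖⁻¹) := hmono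
      _ = (‖w ξ‖ * ‖ξ‖) * ∫ η, ‖w η‖ * ‖ξ - η‖⁻¹ := integral_const_mul _ _
      _ ≤ (‖w ξ‖ * ‖ξ‖) * C :=
          mul_le_mul_of_nonneg_left (kernel_integrable w hM ξ).2 (by positivity)

lemma Fk_antisym (w : SchwartzMap E2 ℝ) (ξ η : E2) : Fk w η ξ = -Fk w ξ η := by
  rw [Fk, Fk, inner_perp, inner_perp, norm_sub_rev η ξ]
  simp only [PiLp.sub_apply]
  ring

lemma Fk_prod_integral_zero (w : SchwartzMap E2 ℝ) :
    ∫ p : E2 × E2, Function.uncurry (Fk w) p ∂((volume : Measure E2).prod volume) = 0 := by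
  have hswap : MeasurePreserving (fun p : E2 × E2 => (p.2, p.1))
      ((volume : Measure E2).prod volume) ((volume : Measure E2).prod volume) :=
    Measure.measurePreserving_swap
  have h := hswap.integral_comp
    (MeasurableEquiv.prodComm : (E2 × E2) ≃ᵐ (E2 × E2)).measurableEmbedding
    (Function.uncurry (Fk w))
  have h2 : (fun p : E2 × E2 => Function.uncurry (Fk w) (p.2, p.1))
      = fun p : E2 × E2 => -(Function.uncurry (Fk w) p) := by
    funext p
    exact Fk_antisym w p.1 p.2
  rw [h2] at h
  rw [integral_neg] at h
  linarith

end S14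

open S14 in
/-- if `w̃` is sufficiently regular (here: Schwartz) with
`G^{−1/2} w̃ ∈ L²`, and `ṽ = K_{BS} ⋆ w̃` is its Biot-Savart velocity, then
`∫ G^{−1} w̃ ṽ·∇G = 0`. -/
theorem stmt14 (w : SchwartzMap E2 ℝ) (v : E2 → E2)
    (hw : MemLp (fun ξ => Gg ξ ^ (-(1 : ℝ) / 2) * w ξ) 2 volume)
    (hv : ∀ ξ, v ξ = (2 * π)⁻¹ • ∫ η, (w η / ‖ξ - η‖ ^ 2) • perp (ξ - η)) :
    ∫ ξ, (Gg ξ)⁻¹ * w ξ * ⟪v ξ, gradient Gg ξ⟫ = 0 := by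
  obtain ⟨M, hM⟩ : ∃ M, ∀ x, ‖w x‖ ≤ M := by
    obtain ⟨C, hC⟩ := w.decay 0 0
    exact ⟨C, fun x => by simpa [norm_iteratedFDeriv_zero] using hC.2 x⟩
  have hpt : ∀ ξ, (Gg ξ)⁻¹ * w ξ * ⟪v ξ, gradient Gg ξ⟫
      = (-(4 * π)⁻¹) * ∫ η, Fk w ξ η := by
    intro ξ
    rw [gradient_Gg ξ, hv ξ, real_inner_smul_right, real_inner_smul_left]
    have hii : (⟪∫ η, (w η / ‖ξ - η‖ ^ 2) • perp (ξ - η), ξ⟫ : ℝ)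
        = ∫ η, (w η / ‖ξ - η‖ ^ 2) * ⟪perp (ξ - η), ξ⟫ := by
      rw [real_inner_comm]
      rw [show (⟪ξ, ∫ η, (w η / ‖ξ - η‖ ^ 2) • perp (ξ - η)⟫ : ℝ)
          = innerSL ℝ ξ (∫ η, (w η / ‖ξ - η‖ ^ 2) • perp (ξ - η)) from rfl]
      rw [← (innerSL ℝ ξ).integral_comp_comm (slice_integrable w hM ξ)]
      congr 1
      funext η
      rw [innerSL_apply_apply, real_inner_smul_right, real_inner_comm]
    rw [hii]
    have hFk : ∫ η, Fk w ξ η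
        = w ξ * ∫ η, (w η / ‖ξ - η‖ ^ 2) * ⟪perp (ξ - η), ξ⟫ := by
      rw [← integral_const_mul]
      rfl
    rw [hFk]
    have hGg := (Gg_pos ξ).ne'
    have hπ : (π : ℝ) ≠ 0 := pi_ne_zero
    field_simp
    ring
  calc ∫ ξ, (Gg ξ)⁻¹ * w ξ * ⟪v ξ, gradient Gg ξ⟫
      = ∫ ξ, (-(4 * π)⁻¹) * ∫ η, Fk w ξ η := integral_congr_ae (ae_of_all _ hpt)
    _ = (-(4 * π)⁻¹) * ∫ ξ, ∫ η, Fk w ξ η := integral_const_mul _ _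
    _ = (-(4 * π)⁻¹) * ∫ p : E2 × E2, Fk w p.1 p.2 ∂((volume : Measure E2).prod volume) := by
        rw [integral_integral (Fk_prod_integrable w hM)]
    _ = 0 := by rw [show (∫ p : E2 × E2, Fk w p.1 p.2 ∂((volume : Measure E2).prod volume))
          = ∫ p : E2 × E2, Function.uncurry (Fk w) p ∂((volume : Measure E2).prod volume)
          from rfl, Fk_prod_integral_zero w]; ring

end
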